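/- Residue theorem on ℙ¹: for every rational function h ∈ ℂ(t), the family (Res_a(h))_{a∈ℂ} of residues at the points of ℂ has finite support, and the total residue vanishes: (∑_{a∈ℂ} Res_a(h)) + Res_∞(h) = 0. -/

import Mathlib

open scoped LaurentSeries

/-- The residue of a rational function `h ∈ ℂ(t)` at a point `a ∈ ℂ`: the coefficient of
`t⁻¹` in the formal Laurent series expansion at `0` of the translated function
`t ↦ h(t+a)` (the latter being `RatFunc.laurent a h`). -/
noncomputable def resAt (a : ℂ) (h : RatFunc ℂ) : ℂ :=
  ((RatFunc.laurent a h : RatFunc ℂ) : LaurentSeries ℂ).coeff (-1)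

/-- The substitution `t ↦ 1/t` applied to a rational function: `h(1/t) = p(1/t)/q(1/t)`
where `h = p/q` in lowest terms. -/
noncomputable def invSubst (h : RatFunc ℂ) : RatFunc ℂ :=
  Polynomial.aeval (RatFunc.X : RatFunc ℂ)⁻¹ h.num /
    Polynomial.aeval (RatFunc.X : RatFunc ℂ)⁻¹ h.denom

/-- The residue of a rational function at infinity: `Res_∞(h) := −Res_0(t⁻²·h(1/t))`. -/
noncomputable def resInf (h : RatFunc ℂ) : ℂ :=
  -resAt 0 ((RatFunc.X : RatFunc ℂ) ^ (-2 : ℤ) * invSubst h)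

/-- A rational function is regular at `a ∈ ℂ` if it can be written with denominator not
vanishing at `a`. -/
def RegularAt (f : RatFunc ℂ) (a : ℂ) : Prop :=
  ∃ p q : Polynomial ℂ, q.eval a ≠ 0 ∧
    f = algebraMap (Polynomial ℂ) (RatFunc ℂ) p / algebraMap (Polynomial ℂ) (RatFunc ℂ) q

/-- A rational function is regular at infinity if it can be written with numerator degree
at most denominator degree. -/
def RegularAtInfinity (f : RatFunc ℂ) : Prop :=
  ∃ p q : Polynomial ℂ, q ≠ 0 ∧ p.degree ≤ q.degree ∧
    f = algebraMap (Polynomial ℂ) (RatFunc ℂ) p / algebraMap (Polynomial ℂ) (RatFunc ℂ) q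

/-- The derivative of a rational function, via the quotient rule. -/
noncomputable def ratDeriv (f : RatFunc ℂ) : RatFunc ℂ :=
  (algebraMap (Polynomial ℂ) (RatFunc ℂ) (Polynomial.derivative f.num) *
      algebraMap (Polynomial ℂ) (RatFunc ℂ) f.denom -
    algebraMap (Polynomial ℂ) (RatFunc ℂ) f.num *
      algebraMap (Polynomial ℂ) (RatFunc ℂ) (Polynomial.derivative f.denom)) /
    algebraMap (Polynomial ℂ) (RatFunc ℂ) (f.denom ^ 2)


section Aux
open Polynomial HahnSeries

lemma aeval_inv_X_ne_zero {p : ℂ[X]} (hp : p ≠ 0) :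
    Polynomial.aeval (RatFunc.X : RatFunc ℂ)⁻¹ p ≠ 0 := by
  have : Invertible (RatFunc.X : RatFunc ℂ)⁻¹ :=
    invertibleOfNonzero (inv_ne_zero RatFunc.X_ne_zero)
  intro h0
  have hrev : Polynomial.eval₂ (algebraMap ℂ (RatFunc ℂ)) (RatFunc.X : RatFunc ℂ)⁻¹ p = 0 := by
    simpa [Polynomial.aeval_def] using h0
  have h2 : Polynomial.eval₂ (algebraMap ℂ (RatFunc ℂ)) (⅟((RatFunc.X : RatFunc ℂ)⁻¹)) p.reverse = 0 :=
    (Polynomial.eval₂_reverse_eq_zero_iff (algebraMap ℂ (RatFunc ℂ))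
      (RatFunc.X : RatFunc ℂ)⁻¹ p).mpr hrev
  rw [invOf_eq_inv, inv_inv] at h2
  have h3 : (Polynomial.aeval (RatFunc.X : RatFunc ℂ)) p.reverse = 0 := by
    simpa [Polynomial.aeval_def] using h2
  rw [← RatFunc.algebraMap_X, Polynomial.aeval_algebraMap_apply,
    Polynomial.aeval_X_left_apply] at h3
  exact hp (Polynomial.reverse_eq_zero.mp
    ((map_eq_zero_iff _ (IsFractionRing.injective ℂ[X] (RatFunc ℂ))).mp h3))


/-- `t ↦ 1/t` substitution as a ring homomorphism. -/
noncomputable def invSubstHom : RatFunc ℂ →+* RatFunc ℂ :=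
  RatFunc.liftRingHom ((Polynomial.aeval (RatFunc.X : RatFunc ℂ)⁻¹).toRingHom) (by
    intro p hp
    rw [mem_nonZeroDivisors_iff_ne_zero] at hp
    simpa [mem_nonZeroDivisors_iff_ne_zero] using aeval_inv_X_ne_zero hp)

lemma invSubst_eq (h : RatFunc ℂ) : invSubst h = invSubstHom h := by
  rw [invSubstHom, RatFunc.liftRingHom_apply]; rfl

lemma invSubstHom_algebraMap (p : ℂ[X]) :
    invSubstHom (algebraMap ℂ[X] (RatFunc ℂ) p) = Polynomial.aeval (RatFunc.X : RatFunc ℂ)⁻¹ p := by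
  have := RatFunc.liftRingHom_apply_div ((Polynomial.aeval (RatFunc.X : RatFunc ℂ)⁻¹).toRingHom)
    (by intro p hp
        rw [mem_nonZeroDivisors_iff_ne_zero] at hp
        simpa [mem_nonZeroDivisors_iff_ne_zero] using aeval_inv_X_ne_zero hp) p 1
  simpa [invSubstHom] using this

lemma coe_ps_coeff_neg (v : PowerSeries ℂ) {n : ℤ} (hn : n < 0) :
    (HahnSeries.ofPowerSeries ℤ ℂ v).coeff n = 0 := by
  rw [HahnSeries.ofPowerSeries_apply, HahnSeries.embDomain_notin_range]
  rintro ⟨m, hm⟩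
  simp at hm
  omega

-- inverse of a power series with nonzero constant coefficient, in LaurentSeries
lemma coe_inv_ps (v : PowerSeries ℂ) (hv : PowerSeries.constantCoeff v ≠ 0) :
    ((HahnSeries.ofPowerSeries ℤ ℂ v) : LaurentSeries ℂ)⁻¹ =
      HahnSeries.ofPowerSeries ℤ ℂ (v⁻¹) := by
  refine inv_eq_of_mul_eq_one_right ?_
  rw [← map_mul, PowerSeries.mul_inv_cancel _ hv, map_one]

lemma resAt_add (a : ℂ) (f g : RatFunc ℂ) : resAt a (f + g) = resAt a f + resAt a g := by
  simp [resAt, map_add]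

-- coercion of inverse of X
lemma coe_inv_X : ((RatFunc.X : RatFunc ℂ)⁻¹ : LaurentSeries ℂ) = HahnSeries.single (-1 : ℤ) 1 := by
  refine inv_eq_of_mul_eq_one_right ?_
  rw [RatFunc.coe_X, HahnSeries.single_mul_single]
  norm_num

lemma RatFunc.coe_mul (f g : RatFunc ℂ) :
    ((f * g : RatFunc ℂ) : LaurentSeries ℂ) = (f : LaurentSeries ℂ) * g := map_mul _ f g

lemma RatFunc.coe_add (f g : RatFunc ℂ) :
    ((f + g : RatFunc ℂ) : LaurentSeries ℂ) = (f : LaurentSeries ℂ) + g := map_add _ f g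

lemma RatFunc.coe_sub (f g : RatFunc ℂ) :
    ((f - g : RatFunc ℂ) : LaurentSeries ℂ) = (f : LaurentSeries ℂ) - g := map_sub _ f g

lemma RatFunc.coe_one : ((1 : RatFunc ℂ) : LaurentSeries ℂ) = 1 := map_one _

lemma RatFunc.coe_pow (f : RatFunc ℂ) (n : ℕ) :
    ((f ^ n : RatFunc ℂ) : LaurentSeries ℂ) = (f : LaurentSeries ℂ) ^ n := map_pow _ f n

lemma RatFunc.coe_C (c : ℂ) :
    ((RatFunc.C c : RatFunc ℂ) : LaurentSeries ℂ) = HahnSeries.C c := by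
  rw [← RatFunc.algebraMap_C, show algebraMap ℂ[X] (RatFunc ℂ) (Polynomial.C c)
      = ((Polynomial.C c : ℂ[X]) : RatFunc ℂ) from rfl, ← RatFunc.coe_coe, Polynomial.coe_C,
    HahnSeries.ofPowerSeries_C]

lemma ratfunc_coe_inv (f : RatFunc ℂ) :
    ((f⁻¹ : RatFunc ℂ) : LaurentSeries ℂ) = (f : LaurentSeries ℂ)⁻¹ := by
  simpa [one_div] using RatFunc.coe_div (1 : RatFunc ℂ) f

/-- The basic partial-fraction block `c / (X - a)^k`. -/
noncomputable def blk (c a : ℂ) (k : ℕ) : RatFunc ℂ :=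
  RatFunc.C c * ((RatFunc.X - RatFunc.C a)⁻¹) ^ k

lemma laurent_blk (b c a : ℂ) (k : ℕ) :
    RatFunc.laurent b (blk c a k) =
      RatFunc.C c * ((RatFunc.X + RatFunc.C (b - a))⁻¹) ^ k := by
  have h1 : RatFunc.laurent b (RatFunc.X - RatFunc.C a)
      = RatFunc.X + RatFunc.C (b - a) := by
    rw [map_sub, RatFunc.laurent_X, RatFunc.laurent_C]
    rw [map_sub]
    ring
  have h2 : RatFunc.laurent b ((RatFunc.X - RatFunc.C a)⁻¹)
      = (RatFunc.X + RatFunc.C (b - a))⁻¹ := by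
    rw [← h1]; exact map_inv₀ (RatFunc.laurent b) _
  rw [blk, map_mul, map_pow, RatFunc.laurent_C, h2]

lemma resAt_blk_self (c a : ℂ) (k : ℕ) :
    resAt a (blk c a k) = if k = 1 then c else 0 := by
  rw [resAt, laurent_blk]
  simp only [sub_self, map_zero, add_zero]
  have hsi : ((HahnSeries.single (1:ℤ) (1:ℂ) : LaurentSeries ℂ))⁻¹
      = HahnSeries.single (-1 : ℤ) (1:ℂ) := by
    refine inv_eq_of_mul_eq_one_right ?_
    rw [HahnSeries.single_mul_single]; norm_num
  rw [RatFunc.coe_mul, RatFunc.coe_pow, ratfunc_coe_inv, RatFunc.coe_X, RatFunc.coe_C, hsi,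
    HahnSeries.single_pow]
  rw [show ((HahnSeries.C c : LaurentSeries ℂ)) = HahnSeries.single (0:ℤ) c from rfl,
    HahnSeries.single_mul_single]
  rw [HahnSeries.coeff_single]
  simp only [zero_add, one_pow, mul_one, smul_eq_mul]
  by_cases hk : k = 1
  · simp [hk]
  · rw [if_neg hk, if_neg (by simp only [nsmul_eq_mul, mul_neg_one]; omega : ¬ (-1 : ℤ) = k • (-1 : ℤ))]

lemma resAt_blk_ne (b c a : ℂ) (hba : b ≠ a) (k : ℕ) :
    resAt b (blk c a k) = 0 := by
  rw [resAt, laurent_blk]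
  set d := b - a with hd
  have hd0 : d ≠ 0 := sub_ne_zero.mpr hba
  set v : PowerSeries ℂ := PowerSeries.X + PowerSeries.C d with hv
  have hvc : PowerSeries.constantCoeff v ≠ 0 := by simp [hv, hd0]
  have hcoe : ((RatFunc.X + RatFunc.C d : RatFunc ℂ) : LaurentSeries ℂ)
      = HahnSeries.ofPowerSeries ℤ ℂ v := by
    rw [RatFunc.coe_add, RatFunc.coe_X, RatFunc.coe_C, hv, map_add,
      HahnSeries.ofPowerSeries_X, HahnSeries.ofPowerSeries_C]
  rw [RatFunc.coe_mul, RatFunc.coe_pow, ratfunc_coe_inv, RatFunc.coe_C, hcoe,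
    coe_inv_ps v hvc, ← map_pow]
  rw [show ((HahnSeries.C c : LaurentSeries ℂ)) = HahnSeries.ofPowerSeries ℤ ℂ (PowerSeries.C c) by
    rw [HahnSeries.ofPowerSeries_C], ← map_mul]
  exact coe_ps_coeff_neg _ (by norm_num)

lemma resAt_polynomial (b : ℂ) (p : ℂ[X]) :
    resAt b (algebraMap ℂ[X] (RatFunc ℂ) p) = 0 := by
  rw [resAt, RatFunc.laurent_algebraMap]
  rw [show (algebraMap ℂ[X] (RatFunc ℂ)) ((Polynomial.taylor b) p)
      = (((Polynomial.taylor b) p : ℂ[X]) : RatFunc ℂ) from rfl, ← RatFunc.coe_coe]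
  exact coe_ps_coeff_neg _ (by norm_num)

lemma resAt_zero_eq_coeff (g : RatFunc ℂ) :
    resAt 0 g = (g : LaurentSeries ℂ).coeff (-1) := by
  rw [resAt, RatFunc.laurent_at_zero]

lemma resInf_add (f g : RatFunc ℂ) : resInf (f + g) = resInf f + resInf g := by
  simp only [resInf, invSubst_eq, map_add]
  rw [mul_add, resAt_add, neg_add]

lemma invSubstHom_C (c : ℂ) : invSubstHom (RatFunc.C c) = RatFunc.C c := by
  rw [← RatFunc.algebraMap_C, invSubstHom_algebraMap, Polynomial.aeval_C]
  simp [RatFunc.algebraMap_eq_C]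

lemma invSubstHom_X : invSubstHom (RatFunc.X) = (RatFunc.X : RatFunc ℂ)⁻¹ := by
  rw [← RatFunc.algebraMap_X, invSubstHom_algebraMap, Polynomial.aeval_X, RatFunc.algebraMap_X]

lemma X_zpow_neg_two : (RatFunc.X : RatFunc ℂ) ^ (-2 : ℤ) = ((RatFunc.X : RatFunc ℂ)⁻¹) ^ 2 := by
  rw [zpow_neg, inv_pow]
  norm_cast

lemma resInf_polynomial (p : Polynomial ℂ) :
    resInf (algebraMap (Polynomial ℂ) (RatFunc ℂ) p) = 0 := by
  rw [resInf, neg_eq_zero]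
  induction p using Polynomial.induction_on' with
  | add f g hf hg =>
      rw [map_add, invSubst_eq, map_add, ← invSubst_eq, ← invSubst_eq, mul_add, resAt_add,
        hf, hg, add_zero]
  | monomial n c =>
      rw [invSubst_eq, invSubstHom_algebraMap, Polynomial.aeval_monomial, resAt_zero_eq_coeff]
      have : (RatFunc.X : RatFunc ℂ) ^ (-2 : ℤ) *
          (algebraMap ℂ (RatFunc ℂ) c * (RatFunc.X : RatFunc ℂ)⁻¹ ^ n)
          = RatFunc.C c * ((RatFunc.X : RatFunc ℂ)⁻¹) ^ (2 + n) := by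
        rw [X_zpow_neg_two, ← RatFunc.algebraMap_eq_C, _root_.pow_add]
        ring
      rw [this]
      have hsi : ((HahnSeries.single (1:ℤ) (1:ℂ) : LaurentSeries ℂ))⁻¹
          = HahnSeries.single (-1 : ℤ) (1:ℂ) := by
        refine inv_eq_of_mul_eq_one_right ?_
        rw [HahnSeries.single_mul_single]; norm_num
      rw [RatFunc.coe_mul, RatFunc.coe_pow, ratfunc_coe_inv, RatFunc.coe_X, RatFunc.coe_C, hsi,
        HahnSeries.single_pow,
        show ((HahnSeries.C c : LaurentSeries ℂ)) = HahnSeries.single (0:ℤ) c from rfl,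
        HahnSeries.single_mul_single, HahnSeries.coeff_single]
      rw [if_neg (by simp only [nsmul_eq_mul, mul_neg_one]; omega : ¬ (-1:ℤ) = 0 + (2+n) • (-1:ℤ))]

lemma coeff_single_mul (r : ℂ) (w : LaurentSeries ℂ) (b n : ℤ) :
    (HahnSeries.single b r * w).coeff n = r * w.coeff (n - b) := by
  have := HahnSeries.coeff_single_mul_add (r := r) (x := w) (a := n - b) (b := b)
  rwa [sub_add_cancel] at this

lemma resInf_blk (c a : ℂ) (k : ℕ) (hk : 1 ≤ k) :
    resInf (blk c a k) = if k = 1 then -c else 0 := by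
  classical
  set u : RatFunc ℂ := 1 - RatFunc.C a * RatFunc.X with hu_def
  have hu : u ≠ 0 := by
    have : u = algebraMap (Polynomial ℂ) (RatFunc ℂ) (1 - Polynomial.C a * Polynomial.X) := by
      rw [map_sub, map_one, map_mul, RatFunc.algebraMap_C, RatFunc.algebraMap_X]
    rw [this]
    simp only [ne_eq, map_eq_zero_iff _ (RatFunc.algebraMap_injective ℂ)]
    intro h
    have := congrArg (fun q => Polynomial.coeff q 0) h
    simp at this
  have hXne : (RatFunc.X : RatFunc ℂ) ≠ 0 := RatFunc.X_ne_zero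
  have hsub : (RatFunc.X : RatFunc ℂ)⁻¹ - RatFunc.C a = RatFunc.X⁻¹ * u := by
    rw [hu_def]; field_simp
  have hinv : ((RatFunc.X : RatFunc ℂ)⁻¹ - RatFunc.C a)⁻¹ = RatFunc.X * u⁻¹ := by
    rw [hsub, mul_inv, inv_inv]
  have hblk : invSubst (blk c a k) = RatFunc.C c * (RatFunc.X * u⁻¹) ^ k := by
    rw [invSubst_eq, blk, map_mul, map_pow, invSubstHom_C]
    have h2 : invSubstHom ((RatFunc.X - RatFunc.C a)⁻¹)
        = ((RatFunc.X : RatFunc ℂ)⁻¹ - RatFunc.C a)⁻¹ := by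
      rw [show invSubstHom ((RatFunc.X - RatFunc.C a)⁻¹)
          = (invSubstHom (RatFunc.X - RatFunc.C a))⁻¹ from map_inv₀ invSubstHom _,
        map_sub, invSubstHom_X, invSubstHom_C]
    rw [h2, hinv]
  set vu : PowerSeries ℂ := 1 - PowerSeries.C a * PowerSeries.X with hvu_def
  have hvuc : PowerSeries.constantCoeff vu ≠ 0 := by simp [hvu_def]
  have hcoeu : ((u : RatFunc ℂ) : LaurentSeries ℂ) = HahnSeries.ofPowerSeries ℤ ℂ vu := by
    simp [hu_def, hvu_def, RatFunc.coe_sub, RatFunc.coe_one, RatFunc.coe_mul, RatFunc.coe_C,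
      RatFunc.coe_X, map_sub, map_mul, (HahnSeries.ofPowerSeries ℤ ℂ).map_one,
      HahnSeries.ofPowerSeries_C, HahnSeries.ofPowerSeries_X]
  have hcoeuinv : ((u⁻¹ : RatFunc ℂ) : LaurentSeries ℂ)
      = HahnSeries.ofPowerSeries ℤ ℂ (vu⁻¹) := by
    rw [ratfunc_coe_inv, hcoeu, coe_inv_ps vu hvuc]
  rcases eq_or_lt_of_le hk with h1 | h2
  · -- k = 1
    rw [if_pos h1.symm, resInf, hblk, ← h1]
    have hE : (RatFunc.X : RatFunc ℂ) ^ (-2 : ℤ) * (RatFunc.C c * (RatFunc.X * u⁻¹) ^ 1)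
        = RatFunc.C c * RatFunc.X⁻¹ * u⁻¹ := by
      rw [X_zpow_neg_two, pow_one]
      field_simp
    rw [hE, resAt_zero_eq_coeff, RatFunc.coe_mul, RatFunc.coe_mul, ratfunc_coe_inv,
      RatFunc.coe_C, RatFunc.coe_X, hcoeuinv]
    have hs1 : ((HahnSeries.single (1:ℤ) (1:ℂ) : LaurentSeries ℂ))⁻¹
        = HahnSeries.single (-1 : ℤ) (1:ℂ) := by
      refine inv_eq_of_mul_eq_one_right ?_
      rw [HahnSeries.single_mul_single]; norm_num
    rw [hs1, show ((HahnSeries.C c : LaurentSeries ℂ)) = HahnSeries.single (0:ℤ) c from rfl,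
      HahnSeries.single_mul_single, _root_.coeff_single_mul]
    rw [show ((-1 : ℤ) - (0 + -1)) = ((0 : ℕ) : ℤ) by ring, LaurentSeries.coeff_coe_powerSeries,
      PowerSeries.coeff_zero_eq_constantCoeff, PowerSeries.constantCoeff_inv]
    simp [hvu_def]
  · -- k ≥ 2
    rw [if_neg (by omega), resInf, hblk, neg_eq_zero]
    obtain ⟨m, rfl⟩ : ∃ m, k = m + 2 := ⟨k - 2, by omega⟩
    have hE : (RatFunc.X : RatFunc ℂ) ^ (-2 : ℤ) * (RatFunc.C c * (RatFunc.X * u⁻¹) ^ (m + 2))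
        = RatFunc.C c * RatFunc.X ^ m * (u⁻¹) ^ (m + 2) := by
      rw [X_zpow_neg_two, mul_pow]
      field_simp
      ring
    rw [hE, resAt_zero_eq_coeff, RatFunc.coe_mul, RatFunc.coe_mul, RatFunc.coe_pow,
      RatFunc.coe_pow, RatFunc.coe_C, RatFunc.coe_X, hcoeuinv]
    rw [show ((HahnSeries.single (1:ℤ) (1:ℂ) : LaurentSeries ℂ))
        = HahnSeries.ofPowerSeries ℤ ℂ PowerSeries.X from (HahnSeries.ofPowerSeries_X).symm,
      show ((HahnSeries.C c : LaurentSeries ℂ))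
        = HahnSeries.ofPowerSeries ℤ ℂ (PowerSeries.C c) from (HahnSeries.ofPowerSeries_C _).symm,
      ← map_pow, ← map_pow, ← map_mul, ← map_mul]
    exact coe_ps_coeff_neg _ (by norm_num)

/-- The statement of the residue theorem, as a predicate. -/
def Pst (h : RatFunc ℂ) : Prop :=
  (Function.support fun a : ℂ => resAt a h).Finite ∧
    (∑ᶠ a : ℂ, resAt a h) + resInf h = 0

lemma Pst_add {f g : RatFunc ℂ} (hf : Pst f) (hg : Pst g) : Pst (f + g) := by
  have hfun : (fun a : ℂ => resAt a (f + g))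
      = fun a : ℂ => resAt a f + resAt a g := funext fun a => resAt_add a f g
  constructor
  · rw [hfun]
    exact (hf.1.union hg.1).subset (Function.support_add _ _)
  · rw [hfun, finsum_add_distrib hf.1 hg.1, resInf_add]
    have h1 := hf.2
    have h2 := hg.2
    ring_nf
    ring_nf at h1 h2
    linear_combination h1 + h2

lemma Pst_poly (p : Polynomial ℂ) : Pst (algebraMap (Polynomial ℂ) (RatFunc ℂ) p) := by
  have hfun : (fun a : ℂ => resAt a (algebraMap (Polynomial ℂ) (RatFunc ℂ) p)) = fun _ => (0:ℂ) :=
    funext fun a => resAt_polynomial a p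
  constructor
  · rw [hfun]; simp
  · rw [hfun, resInf_polynomial]; simp

lemma Pst_blk (c a : ℂ) (k : ℕ) (hk : 1 ≤ k) : Pst (blk c a k) := by
  have hsupp : (Function.support fun b : ℂ => resAt b (blk c a k)) ⊆ {a} := by
    intro b hb
    by_contra hba
    exact hb (resAt_blk_ne b c a (by simpa using hba) k)
  constructor
  · exact (Set.finite_singleton a).subset hsupp
  · rw [finsum_eq_single _ a (fun b hb => resAt_blk_ne b c a hb k), resAt_blk_self,
      resInf_blk c a k hk]
    by_cases h1 : k = 1 <;> simp [h1]

lemma Pst_div (n : ℕ) : ∀ p q : Polynomial ℂ, q ≠ 0 → q.natDegree ≤ n →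
    Pst (algebraMap (Polynomial ℂ) (RatFunc ℂ) p / algebraMap (Polynomial ℂ) (RatFunc ℂ) q) := by
  induction n with
  | zero =>
      intro p q hq hdeg
      obtain ⟨d, hd⟩ := Polynomial.natDegree_eq_zero.mp (Nat.le_zero.mp hdeg)
      have hd0 : d ≠ 0 := fun h => hq (by rw [← hd, h, map_zero])
      have : algebraMap (Polynomial ℂ) (RatFunc ℂ) p / algebraMap (Polynomial ℂ) (RatFunc ℂ) q
          = algebraMap (Polynomial ℂ) (RatFunc ℂ) (Polynomial.C d⁻¹ * p) := by
        rw [← hd, map_mul, div_eq_iff (by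
          simpa [RatFunc.algebraMap_C] using
            (RatFunc.algebraMap_ne_zero (by simpa using hd0 : (Polynomial.C d : Polynomial ℂ) ≠ 0)))]
        rw [← map_mul, ← map_mul]
        congr 1
        rw [mul_comm, ← mul_assoc, ← Polynomial.C_mul, mul_inv_cancel₀ hd0]
        simp
      rw [this]
      exact Pst_poly _
  | succ n ih =>
      intro p q hq hdeg
      by_cases h0 : q.natDegree = 0
      · obtain ⟨d, hd⟩ := Polynomial.natDegree_eq_zero.mp h0
        have hd0 : d ≠ 0 := fun h => hq (by rw [← hd, h, map_zero])
        have : algebraMap (Polynomial ℂ) (RatFunc ℂ) p / algebraMap (Polynomial ℂ) (RatFunc ℂ) q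
            = algebraMap (Polynomial ℂ) (RatFunc ℂ) (Polynomial.C d⁻¹ * p) := by
          rw [← hd, map_mul, div_eq_iff (by
            simpa [RatFunc.algebraMap_C] using
              (RatFunc.algebraMap_ne_zero (by simpa using hd0 : (Polynomial.C d : Polynomial ℂ) ≠ 0)))]
          rw [← map_mul, ← map_mul]
          congr 1
          rw [mul_comm, ← mul_assoc, ← Polynomial.C_mul, mul_inv_cancel₀ hd0]
          simp
        rw [this]
        exact Pst_poly _
      · have hdpos : 0 < q.degree := Polynomial.natDegree_pos_iff_degree_pos.mp (by omega)
        obtain ⟨a, ha⟩ := Complex.exists_root hdpos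
        set k := Polynomial.rootMultiplicity a q with hk_def
        set q₁ := q /ₘ (Polynomial.X - Polynomial.C a) ^ k with hq₁_def
        have hfact : (Polynomial.X - Polynomial.C a) ^ k * q₁ = q :=
          Polynomial.pow_mul_divByMonic_rootMultiplicity_eq q a
        have hq₁ : q₁.eval a ≠ 0 :=
          Polynomial.eval_divByMonic_pow_rootMultiplicity_ne_zero a hq
        have hq₁0 : q₁ ≠ 0 := fun h => hq₁ (by simp [h])
        have hkpos : 1 ≤ k := (Polynomial.rootMultiplicity_pos hq).mpr ha
        obtain ⟨k', hk'⟩ : ∃ k', k = k' + 1 := ⟨k - 1, by omega⟩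
        set c := p.eval a / q₁.eval a with hc_def
        have hroot : (p - Polynomial.C c * q₁).eval a = 0 := by
          simp only [Polynomial.eval_sub, Polynomial.eval_mul, Polynomial.eval_C, hc_def]
          field_simp
          ring
        obtain ⟨p₁, hp₁⟩ := Polynomial.dvd_iff_isRoot.mpr hroot
        have hp' : p = Polynomial.C c * q₁ + (Polynomial.X - Polynomial.C a) * p₁ := by
          linear_combination hp₁
        set i := algebraMap (Polynomial ℂ) (RatFunc ℂ) with hi_def
        have hXa : (Polynomial.X - Polynomial.C a : Polynomial ℂ) ≠ 0 :=
          Polynomial.X_sub_C_ne_zero a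
        have hA : i (Polynomial.X - Polynomial.C a) ≠ 0 := RatFunc.algebraMap_ne_zero hXa
        have hQ1 : i q₁ ≠ 0 := RatFunc.algebraMap_ne_zero hq₁0
        have hblkX : (RatFunc.X - RatFunc.C a : RatFunc ℂ) = i (Polynomial.X - Polynomial.C a) := by
          rw [map_sub, RatFunc.algebraMap_X, RatFunc.algebraMap_C]
        have key : i p / i q
            = blk c a (k' + 1) + i p₁ / i ((Polynomial.X - Polynomial.C a) ^ k' * q₁) := by
          rw [← hfact, hp', hk']
          rw [map_add, map_mul, map_mul, map_mul, map_pow, RatFunc.algebraMap_C]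
          rw [blk, hblkX, add_div]
          congr 1
          · rw [mul_comm (RatFunc.C c) (i q₁),
              mul_comm ((i (Polynomial.X - Polynomial.C a)) ^ (k' + 1)) (i q₁),
              mul_div_mul_left _ _ hQ1, inv_pow, div_eq_mul_inv]
          · have hre : (i (Polynomial.X - Polynomial.C a)) ^ (k' + 1) * i q₁
                = i (Polynomial.X - Polynomial.C a)
                  * ((i (Polynomial.X - Polynomial.C a)) ^ k' * i q₁) := by ring
            rw [hre, mul_div_mul_left _ _ hA, map_mul, map_pow]
        rw [key]
        refine Pst_add (Pst_blk c a (k' + 1) (by omega))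
          (ih p₁ _ (mul_ne_zero (pow_ne_zero _ hXa) hq₁0) ?_)
        have hdq : q.natDegree = k + q₁.natDegree := by
          rw [← hfact, Polynomial.natDegree_mul (pow_ne_zero _ hXa) hq₁0,
            Polynomial.natDegree_pow, Polynomial.natDegree_X_sub_C, mul_one]
        rw [Polynomial.natDegree_mul (pow_ne_zero _ hXa) hq₁0, Polynomial.natDegree_pow,
          Polynomial.natDegree_X_sub_C, mul_one]
        omega

end Aux

/-- Residue theorem on `ℙ¹`: for every rational function `h ∈ ℂ(t)`, the family of residues
`(Res_a(h))_{a∈ℂ}` has finite support and the total residue vanishes: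
`(∑_{a∈ℂ} Res_a(h)) + Res_∞(h) = 0`. -/
theorem residue_theorem_P1 (h : RatFunc ℂ) :
    (Function.support fun a : ℂ => resAt a h).Finite ∧
      (∑ᶠ a : ℂ, resAt a h) + resInf h = 0 := by
  have := Pst_div h.denom.natDegree h.num h.denom h.denom_ne_zero le_rfl
  rwa [RatFunc.num_div_denom] at this
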